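/- Let K be a cone in a normed linear space X, let 0 < r < R, and fix h ∈ K with h ≠ 0. Define ρ : {x ∈ K : ‖x‖ ≤ R} → X by ρ(x) = r·(x + (r − ‖x‖)²h)/‖x + (r − ‖x‖)²h‖ if ‖x‖ < r, and ρ(x) = x if r ≤ ‖x‖ ≤ R. Then for every x ∈ K with ‖x‖ < r one has x + (r − ‖x‖)²h ≠ 0 (so ρ is well defined), ρ is continuous, ρ maps {x ∈ K : ‖x‖ ≤ R} into {x ∈ K : r ≤ ‖x‖ ≤ R} (in particular ‖ρ(x)‖ = r whenever ‖x‖ < r), and ρ(x) = x for every x ∈ K with r ≤ ‖x‖ ≤ R; that is, ρ is a retraction of {x ∈ K : ‖x‖ ≤ R} onto {x ∈ K : r ≤ ‖x‖ ≤ R}. -/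
import Mathlib


open Set

/-- A cone in a normed linear space: a closed convex subset `K` such that
`λ • u ∈ K` for every `u ∈ K` and every `λ ≥ 0`, and `K ∩ (-K) = {0}`. -/
def IsCone {X : Type*} [NormedAddCommGroup X] [NormedSpace ℝ X] (K : Set X) : Prop :=
  IsClosed K ∧ Convex ℝ K ∧ (∀ u ∈ K, ∀ l : ℝ, 0 ≤ l → l • u ∈ K) ∧ K ∩ (-K) = {0}

/-- The map `ρ` is a retraction of the ball `{x ∈ K : ‖x‖ ≤ R}` of the cone `K`
onto the conical shell `{x ∈ K : r ≤ ‖x‖ ≤ R}`. -/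
theorem retraction_onto_shell
    {X : Type*} [NormedAddCommGroup X] [NormedSpace ℝ X]
    (K : Set X) (hK : IsCone K)
    (r R : ℝ) (hr : 0 < r) (hrR : r < R)
    (h : X) (hhK : h ∈ K) (hh0 : h ≠ 0)
    (ρ : X → X)
    (hρ : ∀ x : X, ρ x =
      if ‖x‖ < r then
        (r / ‖x + (r - ‖x‖) ^ 2 • h‖) • (x + (r - ‖x‖) ^ 2 • h)
      else x) :
    (∀ x ∈ K, ‖x‖ < r → x + (r - ‖x‖) ^ 2 • h ≠ 0) ∧
    ContinuousOn ρ {x ∈ K | ‖x‖ ≤ R} ∧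
    MapsTo ρ {x ∈ K | ‖x‖ ≤ R} {x ∈ K | r ≤ ‖x‖ ∧ ‖x‖ ≤ R} ∧
    (∀ x ∈ K, ‖x‖ < r → ‖ρ x‖ = r) ∧
    (∀ x ∈ K, r ≤ ‖x‖ → ‖x‖ ≤ R → ρ x = x) := by
  obtain ⟨hKc, hKconv, hKsmul, hKcap⟩ := hK
  -- K is closed under addition
  have hadd : ∀ u ∈ K, ∀ v ∈ K, u + v ∈ K := by
    intro u hu v hv
    have hmid : (1/2 : ℝ) • u + (1/2 : ℝ) • v ∈ K :=
      hKconv hu hv (by norm_num) (by norm_num) (by norm_num)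
    have h2 := hKsmul _ hmid 2 (by norm_num)
    have heq : (2:ℝ) • ((1/2 : ℝ) • u + (1/2 : ℝ) • v) = u + v := by
      rw [smul_add, smul_smul, smul_smul]; norm_num
    rwa [heq] at h2
  have hyK : ∀ x ∈ K, x + (r - ‖x‖) ^ 2 • h ∈ K := fun x hx =>
    hadd x hx _ (hKsmul h hhK _ (sq_nonneg _))
  -- nonvanishing
  have hnz : ∀ x ∈ K, ‖x‖ ≤ r → x + (r - ‖x‖) ^ 2 • h ≠ 0 := by
    intro x hx hxr hcon
    have hnegx : -x = (r - ‖x‖) ^ 2 • h := by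
      rw [neg_eq_iff_add_eq_zero, add_comm]
      simpa [add_comm] using hcon
    have hxneg : x ∈ -K := by
      rw [Set.mem_neg]
      rw [hnegx]
      exact hKsmul h hhK _ (sq_nonneg _)
    have hx0 : x = 0 := by
      have : x ∈ K ∩ (-K) := ⟨hx, hxneg⟩
      rw [hKcap] at this
      simpa using this
    subst hx0
    rw [norm_zero, sub_zero, zero_add] at hcon
    rcases smul_eq_zero.mp hcon with h1 | h1
    · exact (pow_ne_zero 2 (ne_of_gt hr)) h1
    · exact hh0 h1
  have hnz' : ∀ x ∈ K, ‖x‖ < r → x + (r - ‖x‖) ^ 2 • h ≠ 0 :=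
    fun x hx hxr => hnz x hx hxr.le
  -- norm of ρ on the inner region
  have hnorm : ∀ x ∈ K, ‖x‖ < r → ‖ρ x‖ = r := by
    intro x hx hxr
    rw [hρ, if_pos hxr]
    have hy0 : (0:ℝ) < ‖x + (r - ‖x‖) ^ 2 • h‖ :=
      norm_pos_iff.mpr (hnz x hx hxr.le)
    rw [norm_smul, Real.norm_eq_abs, abs_of_pos (div_pos hr hy0),
      div_mul_cancel₀ _ (ne_of_gt hy0)]
  -- retraction property on outer region
  have hid : ∀ x ∈ K, r ≤ ‖x‖ → ‖x‖ ≤ R → ρ x = x := by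
    intro x hx hxr _
    rw [hρ, if_neg (not_lt.mpr hxr)]
  -- maps to
  have hmaps : MapsTo ρ {x ∈ K | ‖x‖ ≤ R} {x ∈ K | r ≤ ‖x‖ ∧ ‖x‖ ≤ R} := by
    intro x hx
    obtain ⟨hxK, hxR⟩ := hx
    by_cases hlt : ‖x‖ < r
    · have hn := hnorm x hxK hlt
      refine ⟨?_, by rw [hn], by rw [hn]; exact hrR.le⟩
      rw [hρ, if_pos hlt]
      exact hKsmul _ (hyK x hxK) _
        (div_nonneg hr.le (norm_nonneg _))
    · rw [hρ, if_neg hlt]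
      exact ⟨hxK, not_lt.mp hlt, hxR⟩
  -- continuity
  have hcont : ContinuousOn ρ {x ∈ K | ‖x‖ ≤ R} := by
    have hρfun : ρ = fun x =>
        if ‖x‖ < r then
          (r / ‖x + (r - ‖x‖) ^ 2 • h‖) • (x + (r - ‖x‖) ^ 2 • h)
        else x := funext hρ
    rw [hρfun]
    have hycont : Continuous (fun x : X => x + (r - ‖x‖) ^ 2 • h) :=
      continuous_id.add (((continuous_const.sub continuous_norm).pow 2).smul
        continuous_const)
    apply ContinuousOn.if
    · -- agreement on frontier
      intro a ⟨has, hafr⟩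
      have hcl : a ∈ closure {a : X | ‖a‖ < r} := hafr.1
      have hcl2 : a ∈ closure ({a : X | ‖a‖ < r}ᶜ) := by
        rw [frontier_eq_closure_inter_closure] at hafr
        exact hafr.2
      have h1 : ‖a‖ ≤ r := by
        have hsub : closure {a : X | ‖a‖ < r} ⊆ {a : X | ‖a‖ ≤ r} :=
          closure_minimal (Set.setOf_subset_setOf.mpr fun z => le_of_lt)
            (isClosed_le continuous_norm continuous_const)
        exact hsub hcl
      have h2 : r ≤ ‖a‖ := by
        have hclosed : IsClosed ({a : X | ‖a‖ < r}ᶜ) := by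
          have : ({a : X | ‖a‖ < r}ᶜ) = {a : X | r ≤ ‖a‖} := by
            ext z; simp [not_lt]
          rw [this]
          exact isClosed_le continuous_const continuous_norm
        have := hclosed.closure_subset hcl2
        simpa [not_lt] using this
      have har : ‖a‖ = r := le_antisymm h1 h2
      simp only [har, sub_self, ne_eq, OfNat.ofNat_ne_zero, not_false_eq_true,
        zero_pow, zero_smul, add_zero]
      rw [div_self (ne_of_gt hr), one_smul]
    · -- continuity of the inner branch
      have hne : ∀ x ∈ {x ∈ K | ‖x‖ ≤ R} ∩ closure {a : X | ‖a‖ < r},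
          ‖x + (r - ‖x‖) ^ 2 • h‖ ≠ 0 := by
        intro x ⟨⟨hxK, _⟩, hxcl⟩
        have hxr : ‖x‖ ≤ r := by
          have hsub : closure {a : X | ‖a‖ < r} ⊆ {a : X | ‖a‖ ≤ r} :=
            closure_minimal (Set.setOf_subset_setOf.mpr fun z => le_of_lt)
              (isClosed_le continuous_norm continuous_const)
          exact hsub hxcl
        exact norm_ne_zero_iff.mpr (hnz x hxK hxr)
      exact (continuousOn_const.div hycont.norm.continuousOn hne).smul
        hycont.continuousOn
    · exact continuousOn_id
  exact ⟨hnz', hcont, hmaps, hnorm, hid⟩
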